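/- Given two partitions I_p (of size x) and I_q (of size y ≥ 4) of the integer range [1,n] into consecutive intervals, there exists a refinement of I_p into at most x + ⌊y/2⌋ consecutive intervals such that every interval of the refinement overlaps at most three intervals of I_q. -/

import Mathlib

namespace PBWT

/-- Two intervals `[p.1, p.2]` and `[q.1, q.2]` of integers overlap
(share a common element, given that both are nonempty). -/
def Overlaps (p q : ℕ × ℕ) : Prop := p.1 ≤ q.2 ∧ q.1 ≤ p.2

/-- `L` is a partition of the integer range `[1, n]` into consecutive intervals. -/
def IsIntervalPartition (n : ℕ) (L : List (ℕ × ℕ)) : Prop :=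
  L ≠ [] ∧ (∀ p ∈ L, p.1 ≤ p.2) ∧
    (∀ hL : L ≠ [], (L.head hL).1 = 1 ∧ (L.getLast hL).2 = n) ∧
    List.Chain' (fun p q => q.1 = p.2 + 1) L

/-- select every second element (0-based odd indices) -/
def sel : List ℕ → List ℕ
  | _ :: y :: r => y :: sel r
  | _ => []

lemma sel_length : ∀ E : List ℕ, (sel E).length = E.length / 2
  | [] => rfl
  | [_] => by simp [sel]
  | _ :: _ :: r => by
    simp only [sel, List.length_cons, sel_length r]
    omega

lemma sel_subset : ∀ E : List ℕ, ∀ t ∈ sel E, t ∈ E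
  | [], t, h => by simp [sel] at h
  | [_], t, h => by simp [sel] at h
  | x :: y :: r, t, h => by
    simp only [sel, List.mem_cons] at h ⊢
    rcases h with h | h
    · exact Or.inr (Or.inl h)
    · exact Or.inr (Or.inr (sel_subset r t h))

lemma sel_between : ∀ E : List ℕ, E.Pairwise (· < ·) →
    ∀ a b e e', e ∈ E → e' ∈ E → e ≠ e' → a ≤ e → e < b → a ≤ e' → e' < b →
    ∃ t ∈ sel E, a ≤ t ∧ t < b
  | [], _, a, b, e, e', he, _, _, _, _, _, _ => by simp at he
  | [x], _, a, b, e, e', he, he', hne, _, _, _, _ => by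
    simp at he he'; omega
  | x :: y :: r, hp, a, b, e, e', he, he', hne, hae, heb, hae', heb' => by
    rw [List.pairwise_cons, List.pairwise_cons] at hp
    obtain ⟨hx, hy, hp⟩ := hp
    by_cases hyok : a ≤ y ∧ y < b
    · exact ⟨y, by simp [sel], hyok⟩
    · simp only [List.mem_cons] at he he'
      have hxy : x < y := hx y (by simp)
      rcases he with rfl | rfl | he
      · rcases he' with rfl | rfl | he'
        · omega
        · omega
        · have := hy e' he'
          have := hx y (by simp)
          exact absurd ⟨by omega, by omega⟩ hyok
      · omega
      · rcases he' with rfl | rfl | he'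
        · have := hy e he
          exact absurd ⟨by omega, by omega⟩ hyok
        · omega
        · obtain ⟨t, ht, h1, h2⟩ := sel_between r hp a b e e' he he' hne hae heb hae' heb'
          exact ⟨t, by simp [sel, ht], h1, h2⟩

def mk : ℕ → List ℕ → List (ℕ × ℕ)
  | _, [] => []
  | prev, c :: cs => (prev + 1, c) :: mk c cs

lemma mk_length : ∀ prev l, (mk prev l).length = l.length
  | _, [] => rfl
  | prev, c :: cs => by simp [mk, mk_length c cs]

lemma mk_chain : ∀ prev l, List.Chain' (fun p q => q.1 = p.2 + 1) (mk prev l)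
  | _, [] => List.isChain_nil
  | prev, [c] => by simp [mk]; exact List.isChain_singleton _
  | prev, c :: c' :: cs => by
    have := mk_chain c (c' :: cs)
    simp only [mk] at this ⊢
    exact List.IsChain.cons_cons rfl this

lemma mk_ne_nil {prev : ℕ} {l : List ℕ} (h : l ≠ []) : mk prev l ≠ [] := by
  cases l with
  | nil => exact absurd rfl h
  | cons c cs => simp [mk]

lemma mk_head (prev c : ℕ) (cs : List ℕ) :
    ((mk prev (c :: cs)).head (by simp [mk])).1 = prev + 1 := rfl

lemma mk_head' : ∀ (prev : ℕ) (l : List ℕ) (h : mk prev l ≠ []),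
    ((mk prev l).head h).1 = prev + 1
  | _, [], h => absurd rfl h
  | prev, c :: cs, _ => rfl

lemma mk_getLast : ∀ (prev : ℕ) (l : List ℕ) (h : l ≠ []),
    ((mk prev l).getLast (mk_ne_nil h)).2 = l.getLast h
  | _, [], h => absurd rfl h
  | prev, [c], _ => rfl
  | prev, c :: c' :: cs, _ => by
    show (((prev + 1, c) :: mk c (c' :: cs)).getLast (by simp [mk])).2 = _
    rw [List.getLast_cons (mk_ne_nil (by simp)), List.getLast_cons (by simp)]
    exact mk_getLast c (c' :: cs) (by simp)

lemma mk_mem : ∀ (prev : ℕ) (l : List ℕ), (∀ e ∈ l, prev < e) → l.Pairwise (· < ·) →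
    ∀ s ∈ mk prev l,
      prev < s.1 ∧ s.1 ≤ s.2 ∧ s.2 ∈ l ∧ (s.1 = prev + 1 ∨ s.1 - 1 ∈ l) ∧
      ∀ e ∈ l, s.1 ≤ e → s.2 ≤ e
  | prev, [], _, _, s, hs => by simp [mk] at hs
  | prev, c :: cs, hlt, hpw, s, hs => by
    rw [List.pairwise_cons] at hpw
    obtain ⟨hc, hpw⟩ := hpw
    have hpc : prev < c := hlt c (by simp)
    rw [show mk prev (c :: cs) = (prev + 1, c) :: mk c cs from rfl, List.mem_cons] at hs
    rcases hs with rfl | hs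
    · refine ⟨by omega, by omega, by simp, Or.inl rfl, ?_⟩
      intro e he _
      rcases List.mem_cons.mp he with rfl | he
      · exact le_rfl
      · exact (hc e he).le
    · obtain ⟨h1, h2, h3, h4, h5⟩ := mk_mem c cs hc hpw s hs
      refine ⟨by omega, h2, by simp [h3], ?_, ?_⟩
      · rcases h4 with h4 | h4
        · exact Or.inr (by simp [h4])
        · exact Or.inr (by simp [h4])
      · intro e he hse
        rcases List.mem_cons.mp he with rfl | he
        · omega
        · exact h5 e he hse

lemma part_lb : ∀ (L : List (ℕ × ℕ)) (m : ℕ), (∀ p ∈ L, p.1 ≤ p.2) →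
    List.Chain' (fun p q => q.1 = p.2 + 1) L →
    (∀ h : L ≠ [], m ≤ (L.head h).1) → ∀ p ∈ L, m ≤ p.1
  | [], _, _, _, _, p, hp => by simp at hp
  | q :: t, m, hmono, hchain, hhead, p, hp => by
    have hm : m ≤ q.1 := hhead (by simp)
    rcases List.mem_cons.mp hp with rfl | hp
    · exact hm
    · have ht : t ≠ [] := List.ne_nil_of_mem hp
      have hrel : (t.head ht).1 = q.2 + 1 := by
        rcases List.isChain_cons.mp hchain with ⟨h1, _⟩
        exact h1 _ (List.head_mem_head? ht)
      have hq : q.1 ≤ q.2 := hmono q (by simp)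
      exact part_lb t m (fun p hp => hmono p (by simp [hp]))
        (List.isChain_cons.mp hchain).2 (fun h => by omega) p hp

lemma part_ub : ∀ (L : List (ℕ × ℕ)) (h : L ≠ []), (∀ p ∈ L, p.1 ≤ p.2) →
    List.Chain' (fun p q => q.1 = p.2 + 1) L →
    ∀ p ∈ L, p.2 ≤ (L.getLast h).2
  | [], h, _, _, _, _ => absurd rfl h
  | [q], _, _, _, p, hp => by simp at hp; simp [hp]
  | q :: q' :: t, _, hmono, hchain, p, hp => by
    have hchain' := (List.isChain_cons.mp hchain).2
    have hrel : q'.1 = q.2 + 1 := (List.isChain_cons_cons.mp hchain).1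
    rw [List.getLast_cons (by simp)]
    rcases List.mem_cons.mp hp with rfl | hp
    · have hlb := part_lb (q' :: t) (p.2 + 1) (fun r hr => hmono r (by simp [hr]))
        hchain' (fun h => by simp [hrel]) _ (List.getLast_mem (by simp))
      have := hmono ((q' :: t).getLast (by simp))
        (List.mem_cons_of_mem _ (List.getLast_mem (by simp)))
      omega
    · exact part_ub (q' :: t) (by simp) (fun r hr => hmono r (by simp [hr])) hchain' p hp

lemma part_pairwise : ∀ (L : List (ℕ × ℕ)), (∀ p ∈ L, p.1 ≤ p.2) →
    List.Chain' (fun p q => q.1 = p.2 + 1) L →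
    L.Pairwise (fun p q => p.2 < q.1)
  | [], _, _ => List.Pairwise.nil
  | q :: t, hmono, hchain => by
    rw [List.pairwise_cons]
    constructor
    · intro p hp
      have := part_lb t (q.2 + 1) (fun r hr => hmono r (by simp [hr]))
        (List.isChain_cons.mp hchain).2
        (fun h => by
          have := (List.isChain_cons.mp hchain).1 _ (List.head_mem_head? h)
          omega) p hp
      omega
    · exact part_pairwise t (fun r hr => hmono r (by simp [hr])) (List.isChain_cons.mp hchain).2

lemma part_cover : ∀ (L : List (ℕ × ℕ)) (h : L ≠ []) (m : ℕ), (∀ p ∈ L, p.1 ≤ p.2) →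
    List.Chain' (fun p q => q.1 = p.2 + 1) L →
    (L.head h).1 ≤ m → m ≤ (L.getLast h).2 → ∃ p ∈ L, p.1 ≤ m ∧ m ≤ p.2
  | [], h, _, _, _, _, _ => absurd rfl h
  | [q], _, m, _, _, h1, h2 => ⟨q, by simp, h1, h2⟩
  | q :: q' :: t, _, m, hmono, hchain, h1, h2 => by
    have hrel : q'.1 = q.2 + 1 := (List.isChain_cons_cons.mp hchain).1
    by_cases hm : m ≤ q.2
    · exact ⟨q, by simp, h1, hm⟩
    · rw [List.getLast_cons (by simp)] at h2
      obtain ⟨p, hp, h3, h4⟩ := part_cover (q' :: t) (by simp) m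
        (fun r hr => hmono r (by simp [hr])) (List.isChain_cons.mp hchain).2
        (by simp only [List.head_cons]; omega) h2
      exact ⟨p, List.mem_cons_of_mem _ hp, h3, h4⟩

lemma part_pred : ∀ (L : List (ℕ × ℕ)), List.Chain' (fun p q => q.1 = p.2 + 1) L →
    ∀ p ∈ L, (∀ h : L ≠ [], p.1 ≠ (L.head h).1) → ∃ p' ∈ L, p'.2 + 1 = p.1
  | [], _, p, hp, _ => by simp at hp
  | q :: t, hchain, p, hp, hne => by
    rcases List.mem_cons.mp hp with rfl | hp
    · exact absurd rfl (hne (by simp))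
    · have ht : t ≠ [] := List.ne_nil_of_mem hp
      by_cases hph : p.1 = (t.head ht).1
      · have : (t.head ht).1 = q.2 + 1 :=
          (List.isChain_cons.mp hchain).1 _ (List.head_mem_head? ht)
        exact ⟨q, by simp, by omega⟩
      · obtain ⟨p', hp', h⟩ := part_pred t (List.isChain_cons.mp hchain).2 p hp
          (fun h => hph)
        exact ⟨p', by simp [hp'], h⟩

lemma filter_split {α : Type*} (p p1 p2 : α → Bool) : ∀ l : List α,
    (∀ x ∈ l, p x → p1 x ∨ p2 x) →
    (l.filter p).length ≤ (l.filter p1).length + (l.filter p2).length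
  | [], _ => by simp
  | x :: t, h => by
    have IH := filter_split p p1 p2 t (fun y hy => h y (by simp [hy]))
    by_cases hx : p x
    · rcases h x (by simp) hx with h1 | h1 <;>
        simp [List.filter_cons, hx, h1] <;> by_cases h2 : p2 x <;>
          by_cases h3 : p1 x <;> simp [h2, h3] <;> omega
    · simp only [List.filter_cons, hx, if_neg, Bool.false_eq_true, not_false_iff, ite_false]
      by_cases h2 : p2 x <;> by_cases h3 : p1 x <;> simp [h2, h3] <;> omega

lemma filter_le_one {α : Type*} (p : α → Bool) : ∀ l : List α, l.Pairwise (· ≠ ·) →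
    (∀ x ∈ l, ∀ y ∈ l, p x → p y → x = y) → (l.filter p).length ≤ 1
  | [], _, _ => by simp
  | x :: t, hpw, h => by
    rw [List.pairwise_cons] at hpw
    by_cases hx : p x
    · have : t.filter p = [] := by
        rw [List.filter_eq_nil_iff]
        intro y hy hpy
        exact hpw.1 y hy (h x (by simp) y (by simp [hy]) hx hpy)
      simp [List.filter_cons, hx, this]
    · simp only [List.filter_cons, hx, Bool.false_eq_true, not_false_iff, ite_false]
      exact filter_le_one p t hpw.2 (fun a ha b hb => h a (by simp [ha]) b (by simp [hb]))

lemma pairwise_imp_mem {α : Type*} {R S : α → α → Prop} : ∀ l : List α,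
    (∀ x ∈ l, ∀ y ∈ l, R x y → S x y) → l.Pairwise R → l.Pairwise S
  | [], _, _ => List.Pairwise.nil
  | x :: t, h, hp => by
    rw [List.pairwise_cons] at hp ⊢
    exact ⟨fun y hy => h x (by simp) y (by simp [hy]) (hp.1 y hy),
      pairwise_imp_mem t (fun a ha b hb => h a (by simp [ha]) b (by simp [hb])) hp.2⟩

lemma sorted_getLast_max : ∀ (l : List ℕ) (h : l ≠ []), l.Pairwise (· ≤ ·) →
    ∀ x ∈ l, x ≤ l.getLast h
  | [], h, _, _, _ => absurd rfl h
  | [c], _, _, x, hx => by simp at hx; simp [hx]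
  | c :: c' :: t, _, hs, x, hx => by
    rw [List.getLast_cons (by simp)]
    rw [List.pairwise_cons] at hs
    rcases List.mem_cons.mp hx with rfl | hx
    · exact le_trans (hs.1 _ (List.getLast_mem (by simp))) le_rfl
    · exact sorted_getLast_max (c' :: t) (by simp) hs.2 x hx

theorem stmt8 (n : ℕ) (Ip Iq : List (ℕ × ℕ))
    (hp : IsIntervalPartition n Ip) (hq : IsIntervalPartition n Iq)
    (hy : 4 ≤ Iq.length) :
    ∃ R : List (ℕ × ℕ), IsIntervalPartition n R ∧
      R.length ≤ Ip.length + Iq.length / 2 ∧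
      (∀ s ∈ R, ∃ p ∈ Ip, p.1 ≤ s.1 ∧ s.2 ≤ p.2) ∧
      (∀ s ∈ R, (Iq.filter (fun q => s.1 ≤ q.2 && q.1 ≤ s.2)).length ≤ 3) := by
  obtain ⟨hpne, hpmono, hpends, hpchain⟩ := hp
  obtain ⟨hqne, hqmono, hqends, hqchain⟩ := hq
  have hphead := (hpends hpne).1
  have hplast := (hpends hpne).2
  have hqhead := (hqends hqne).1
  have hqlast := (hqends hqne).2
  -- structural facts about Iq
  have hqpair := part_pairwise Iq hqmono hqchain
  have hsndlt : Iq.Pairwise (fun p q => p.2 < q.2) :=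
    pairwise_imp_mem Iq (fun x _ y hy h => lt_of_lt_of_le h (hqmono y hy)) hqpair
  have hEpw : (Iq.map Prod.snd).Pairwise (· < ·) := List.pairwise_map.mpr hsndlt
  have hord : ∀ x ∈ Iq, ∀ y ∈ Iq, x ≠ y → x.2 < y.1 ∨ y.2 < x.1 := by
    haveI : Std.Symm (fun p q : ℕ × ℕ => p.2 < q.1 ∨ q.2 < p.1) :=
      ⟨fun a b h => h.symm.imp id id⟩
    have := (hqpair.imp (fun h => Or.inl h) :
      Iq.Pairwise (fun p q => p.2 < q.1 ∨ q.2 < p.1)).forall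
    exact fun x hx y hy hne => this hx hy hne
  have hqnodup : Iq.Pairwise (· ≠ ·) :=
    hsndlt.imp (fun h he => by rw [he] at h; exact lt_irrefl _ h)
  -- bounds on endpoints
  have hpbound : ∀ p ∈ Ip, 1 ≤ p.1 ∧ p.2 ≤ n := fun p hp => ⟨
    part_lb Ip 1 hpmono hpchain (fun h => by rw [hphead]) p hp,
    hplast ▸ part_ub Ip hpne hpmono hpchain p hp⟩
  have hqbound : ∀ p ∈ Iq, 1 ≤ p.1 ∧ p.2 ≤ n := fun p hp => ⟨
    part_lb Iq 1 hqmono hqchain (fun h => by rw [hqhead]) p hp,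
    hqlast ▸ part_ub Iq hqne hqmono hqchain p hp⟩
  -- the cut set
  set S : Finset ℕ := ((Ip.map Prod.snd) ++ sel (Iq.map Prod.snd)).toFinset with hS
  set l : List ℕ := S.sort (· ≤ ·) with hl
  have hmem_l : ∀ e, e ∈ l ↔ (e ∈ Ip.map Prod.snd ∨ e ∈ sel (Iq.map Prod.snd)) := by
    intro e
    rw [hl, Finset.mem_sort, hS, List.mem_toFinset, List.mem_append]
  have hl1 : ∀ e ∈ l, 1 ≤ e ∧ e ≤ n := by
    intro e he
    rcases (hmem_l e).mp he with h | h
    · obtain ⟨p, hp, rfl⟩ := List.mem_map.mp h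
      exact ⟨le_trans (hpbound p hp).1 (hpmono p hp), (hpbound p hp).2⟩
    · obtain ⟨p, hp, rfl⟩ := List.mem_map.mp (sel_subset _ _ h)
      exact ⟨le_trans (hqbound p hp).1 (hqmono p hp), (hqbound p hp).2⟩
  have hnl : n ∈ l := by
    rw [hmem_l]
    exact Or.inl (List.mem_map.mpr ⟨Ip.getLast hpne, List.getLast_mem hpne, hplast⟩)
  have hlne : l ≠ [] := List.ne_nil_of_mem hnl
  have hsorted : l.Pairwise (· < ·) := (Finset.sortedLT_sort S).pairwise
  have hlastl : l.getLast hlne = n :=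
    le_antisymm (hl1 _ (List.getLast_mem hlne)).2
      (sorted_getLast_max l hlne (Finset.pairwise_sort S _) n hnl)
  have hmk := mk_mem 0 l (fun e he => (hl1 e he).1) hsorted
  refine ⟨mk 0 l, ⟨mk_ne_nil hlne, fun s hs => (hmk s hs).2.1, ?_, mk_chain 0 l⟩, ?_, ?_, ?_⟩
  · intro hR
    constructor
    · exact mk_head' 0 l hR
    · rw [show ((mk 0 l).getLast hR).2 = l.getLast hlne from mk_getLast 0 l hlne]
      exact hlastl
  · rw [mk_length, hl, Finset.length_sort]
    calc S.card ≤ (Ip.map Prod.snd ++ sel (Iq.map Prod.snd)).length := List.toFinset_card_le _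
      _ = Ip.length + Iq.length / 2 := by
          rw [List.length_append, List.length_map, sel_length, List.length_map]
  · -- refinement of Ip
    intro s hs
    obtain ⟨h0, hab, hbl, _, hgap⟩ := hmk s hs
    obtain ⟨p, hpmem, h3, h4⟩ := part_cover Ip hpne s.2 hpmono hpchain
      (by rw [hphead]; exact (hl1 _ hbl).1) (by rw [hplast]; exact (hl1 _ hbl).2)
    refine ⟨p, hpmem, ?_, h4⟩
    by_contra hcon
    push_neg at hcon
    obtain ⟨p', hp', hpred⟩ := part_pred Ip hpchain p hpmem
      (fun h => by rw [hphead]; omega)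
    have hp'l : p'.2 ∈ l := (hmem_l _).mpr (Or.inl (List.mem_map.mpr ⟨p', hp', rfl⟩))
    have := hgap p'.2 hp'l (by omega)
    omega
  · -- overlap bound
    intro s hs
    obtain ⟨h0, hab, hbl, _, hgap⟩ := hmk s hs
    have hsplit := filter_split (fun q => s.1 ≤ q.2 && q.1 ≤ s.2)
      (fun q => s.1 ≤ q.2 && q.2 < s.2) (fun q => q.1 ≤ s.2 && s.2 ≤ q.2) Iq
      (by
        intro x _ hx
        simp only [Bool.and_eq_true, decide_eq_true_eq] at hx ⊢
        omega)
    have h1 : (Iq.filter (fun q => s.1 ≤ q.2 && q.2 < s.2)).length ≤ 1 := by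
      apply filter_le_one _ _ hqnodup
      intro x hx y hy hpx hpy
      simp only [Bool.and_eq_true, decide_eq_true_eq] at hpx hpy
      by_contra hne
      have hsne : x.2 ≠ y.2 := by
        intro he
        rcases hord x hx y hy hne with h | h <;>
          [exact absurd (hqmono y hy) (by omega); exact absurd (hqmono x hx) (by omega)]
      obtain ⟨t, ht, hta, htb⟩ := sel_between (Iq.map Prod.snd) hEpw s.1 s.2 x.2 y.2
        (List.mem_map.mpr ⟨x, hx, rfl⟩) (List.mem_map.mpr ⟨y, hy, rfl⟩) hsne
        hpx.1 hpx.2 hpy.1 hpy.2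
      have htl : t ∈ l := (hmem_l t).mpr (Or.inr ht)
      have := hgap t htl hta
      omega
    have h2 : (Iq.filter (fun q => q.1 ≤ s.2 && s.2 ≤ q.2)).length ≤ 1 := by
      apply filter_le_one _ _ hqnodup
      intro x hx y hy hpx hpy
      simp only [Bool.and_eq_true, decide_eq_true_eq] at hpx hpy
      by_contra hne
      rcases hord x hx y hy hne with h | h <;> omega
    omega

end PBWT
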